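/- (Reification and reflection for the compact-term forcing structure.) Instantiate the forcing structure by: K = CNF (contexts are CNF types), le = the extension relation generated by reflexivity and le w₁ w₂ → le w₁ (con c b w₂), pforces w p = HSb w (prp p), Answer = Base, X w b = HSb w b. Then there are mutually defined functions: creify : ∀ c w, Cont cforces w c → HSc (explogn c w); creflect : ∀ c w, Cont cforces (ntimes c w) c; dreify : ∀ d w, Cont dforces w d → HSb w (bd d); and dreflect : ∀ d c₁ c₂ c₃, HSc (explogn c₁ (ntimes c₃ (con c₁ (bd d) c₂))) → Cont dforces (ntimes c₃ (con c₁ (bd d) c₂)) d. -/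
import Mathlib


namespace ExpLog

-- The mutually inductive grammar of exp-log normal forms:
-- conjunctive normal forms (CNF), disjunctive normal forms (DNF), and base types.
mutual
inductive CNF : Type
  | top : CNF
  | con : CNF → Base → CNF → CNF
  deriving Repr

inductive DNF : Type
  | two : CNF → CNF → DNF
  | dis : CNF → DNF → DNF
  deriving Repr

inductive Base : Type
  | prp : ℕ → Base
  | bd  : DNF → Base
  deriving Repr
end

/-- Exp-log normal forms: either a CNF or a DNF. -/
inductive ENF : Type
  | cnf : CNF → ENF
  | dnf : DNF → ENF
  deriving Repr

/-- Flattening of `+`-associativity (auxiliary). -/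
def nplus1 : DNF → ENF → DNF
  | .two c c0, .cnf c1 => .dis c (.two c0 c1)
  | .two c c0, .dnf d0 => .dis c (.dis c0 d0)
  | .dis c d0, e2 => .dis c (nplus1 d0 e2)

/-- Flattened n-ary sum of two ENFs. -/
def nplus : ENF → ENF → DNF
  | .cnf a, .cnf c => .two a c
  | .cnf a, .dnf d => .dis a d
  | .dnf b, e2 => nplus1 b e2

/-- Flattened n-ary product of two CNFs. -/
def ntimes : CNF → CNF → CNF
  | .top, c2 => c2
  | .con c10 d c13, c2 => .con c10 d (ntimes c13 c2)

/-- Distributivity of a CNF over a DNF. -/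
def distrib0 : CNF → DNF → ENF
  | c, .two c0 c1 => .dnf (.two (ntimes c c0) (ntimes c c1))
  | c, .dis c0 d0 =>
      .dnf (match distrib0 c d0 with
            | .cnf c1 => .two (ntimes c c0) c1
            | .dnf d1 => .dis (ntimes c c0) d1)

/-- Distributivity of a CNF over an ENF. -/
def distrib1 : CNF → ENF → ENF
  | c, .cnf a => .cnf (ntimes c a)
  | c, .dnf b => distrib0 c b

/-- The exp-log rewriting `b^(c₁+⋯+cₙ) ⇝ b^c₁ ⋯ b^cₙ`. -/
def explog0 : Base → DNF → CNF
  | b, .two c1 c2 => ntimes (.con c1 b .top) (.con c2 b .top)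
  | b, .dis c d3 => ntimes (.con c b .top) (explog0 b d3)

/-- The exp-log rewriting of `b^e` for an ENF exponent `e`. -/
def explog1 : Base → ENF → CNF
  | d, .cnf c => .con c d .top
  | d, .dnf d1 => explog0 d d1

/-- Distributivity of a DNF over an ENF. -/
def distribn : DNF → ENF → ENF
  | .two c c0, e2 => .dnf (nplus (distrib1 c e2) (distrib1 c0 e2))
  | .dis c d0, e2 => .dnf (nplus (distrib1 c e2) (distribn d0 e2))

/-- Distributivity of an ENF over an ENF. -/
def distrib : ENF → ENF → ENF
  | .cnf a, e2 => distrib1 a e2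
  | .dnf b, e2 => distribn b e2

/-- The exp-log rewriting of `c^{e₂}` (pointwise currying). -/
def explogn : CNF → ENF → CNF
  | .top, _ => .top
  | .con c1 d c2, e2 => ntimes (explog1 d (distrib1 c1 e2)) (explogn c2 e2)

/-- The CNF corresponding to an atomic type: `(1→p)×1`, identified with `p`. -/
def p2c (p : ℕ) : CNF := .con .top (.prp p) .top

def b2c : Base → CNF
  | .prp p => p2c p
  | .bd d => .con .top (.bd d) .top

/-- Coercion of an ENF to a CNF. -/
def enf2cnf : ENF → CNF
  | .cnf c => c
  | .dnf d => b2c (.bd d)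
-- The intrinsically typed compact terms: HSc (at product/CNF type) and HSb (at base type).
mutual
inductive HSc : CNF → Type
  | tt : HSc .top
  | pair {c1 b c2} : HSb c1 b → HSc c2 → HSc (.con c1 b c2)

inductive HSb : CNF → Base → Type
  | app {p c0 c1 c2} :
      HSc (explogn c1 (.cnf (ntimes c2 (.con c1 (.prp p) c0)))) →
      HSb (ntimes c2 (.con c1 (.prp p) c0)) (.prp p)
  | cas {d b c0 c1 c2 c3} :
      HSc (explogn c1 (.cnf (ntimes c2 (.con c1 (.bd d) c0)))) →
      HSc (explogn (explog0 b d) (.cnf (ntimes c3 (ntimes c2 (.con c1 (.bd d) c0))))) →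
      HSb (ntimes c3 (ntimes c2 (.con c1 (.bd d) c0))) b
  | wkn {c0 c1 b1 b} : HSb c0 b → HSb (.con c1 b1 c0) b
  | inl_two {c0 c1 c2} : HSc (explogn c1 (.cnf c0)) → HSb c0 (.bd (.two c1 c2))
  | inr_two {c0 c1 c2} : HSc (explogn c2 (.cnf c0)) → HSb c0 (.bd (.two c1 c2))
  | inl_dis {c0 c d} : HSc (explogn c (.cnf c0)) → HSb c0 (.bd (.dis c d))
  | inr_dis {c0 c d} : HSb c0 (.bd d) → HSb c0 (.bd (.dis c d))
end
/-- A forcing structure: a type of worlds, a preorder-like relation on worlds,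
an interpretation of atomic types, and a family of answer types. -/
structure ForcingStructure where
  K : Type
  le : K → K → Type
  pforces : K → ℕ → Type
  Answer : Type
  X : K → Answer → Type

/-- The continuation monad over a forcing structure
(`Cont FS f w` is the paper's `Cont f w x` with `f := fun w => f w x`). -/
def Cont (FS : ForcingStructure) (f : FS.K → Type) (w : FS.K) : Type :=
  ∀ (a : FS.Answer) (w' : FS.K), FS.le w w' →
    (∀ w'', FS.le w' w'' → f w'' → FS.X w'' a) → FS.X w' a
-- The forcing fixpoints on CNF, DNF and Base types.
mutual
def cforces (FS : ForcingStructure) : CNF → FS.K → Type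
  | .top => fun _ => PUnit
  | .con c1 b c2 => fun w =>
      (∀ w', FS.le w w' → Cont FS (cforces FS c1) w' → Cont FS (bforces FS b) w') ×
      (Cont FS (cforces FS c2) w)

def dforces (FS : ForcingStructure) : DNF → FS.K → Type
  | .two c1 c2 => fun w => Sum (Cont FS (cforces FS c1) w) (Cont FS (cforces FS c2) w)
  | .dis c1 d2 => fun w => Sum (Cont FS (cforces FS c1) w) (Cont FS (dforces FS d2) w)

def bforces (FS : ForcingStructure) : Base → FS.K → Type
  | .prp p => fun w => FS.pforces w p
  | .bd d => fun w => dforces FS d w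
end

/-- The forcing fixpoint on exp-log normal forms. -/
def eforces (FS : ForcingStructure) : ENF → FS.K → Type
  | .cnf c => cforces FS c
  | .dnf d => dforces FS d

-- The extension relation on CNF contexts.
inductive LeCNF : CNF → CNF → Type
  | refl {w} : LeCNF w w
  | cons {w1 w2 c b} : LeCNF w1 w2 → LeCNF w1 (.con c b w2)

/-- The syntactic forcing structure of the compact term calculus:
worlds are CNF contexts, `le` is context extension, atomic types are
interpreted by compact terms of atomic type, and the answer type at world `w`
and base type `b` is the set of compact terms `HSb w b`. -/
def structureHS : ForcingStructure where
  K := CNF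
  le := LeCNF
  pforces := fun w p => HSb w (.prp p)
  Answer := Base
  X := fun w b => HSb w b

def leTrans : ∀ {w1 w2 w3 : CNF}, LeCNF w1 w2 → LeCNF w2 w3 → LeCNF w1 w3
  | _, _, _, h, .refl => h
  | _, _, _, h, .cons h' => .cons (leTrans h h')

def leNtimes : ∀ (c w : CNF), LeCNF w (ntimes c w)
  | .top, _ => .refl
  | .con _ _ c2, w => .cons (leNtimes c2 w)

def decomp : ∀ {w0 w1 : CNF}, LeCNF w0 w1 → Σ' c : CNF, w1 = ntimes c w0
  | _, _, .refl => ⟨.top, rfl⟩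
  | _, _, .cons (c := c) (b := b) h =>
      let ⟨c', e⟩ := decomp h
      ⟨.con c b c', by rw [e]; rfl⟩

def monCont {f : CNF → Type} {w w' : CNF} (h : LeCNF w w')
    (k : Cont structureHS f w) : Cont structureHS f w' :=
  fun a w2 h2 φ => k a w2 (leTrans h h2) φ

/-- Monotonicity of `dforces` (non-recursive: both summands are `Cont`s). -/
def monD : ∀ (d : DNF) {w w' : CNF}, LeCNF w w' →
    dforces structureHS d w → dforces structureHS d w'
  | .two _ _, _, _, h, v => (Sum.map (monCont h) (monCont h)
      (v : Sum _ _) : Sum _ _)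
  | .dis _ _, _, _, h, v => (Sum.map (monCont h) (monCont h)
      (v : Sum _ _) : Sum _ _)

/-- Return for the `dforces` continuation monad. -/
def retD (d : DNF) {w : CNF} (v : dforces structureHS d w) :
    Cont structureHS (dforces structureHS d) w :=
  fun _ w' h φ => φ w' .refl (monD d h v)

/-- Projection of the second component of a `Cont` at a `con` type. -/
def projCont {c1 : CNF} {b : Base} {c2 w : CNF}
    (k : Cont structureHS (cforces structureHS (.con c1 b c2)) w) :
    Cont structureHS (cforces structureHS c2) w :=
  fun a w' h φ => k a w' h (fun w'' h'' v =>
    (v : (_ × Cont structureHS (cforces structureHS c2) w'')).2 a w'' .refl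
      (fun w3 h3 u => φ w3 (leTrans h'' h3) u))

mutual
/-- Reification at CNF types. -/
def creify : ∀ (c w : CNF),
    Cont structureHS (cforces structureHS c) w → HSc (explogn c (.cnf w))
  | .top, _, _ => .tt
  | .con c1 b c2, w, k =>
      HSc.pair
        (k b (ntimes c1 w) (leNtimes c1 w) (fun w'' h'' v =>
          ((v : ((∀ w', LeCNF w'' w' →
                  Cont structureHS (cforces structureHS c1) w' →
                  Cont structureHS (bforces structureHS b) w') ×
                Cont structureHS (cforces structureHS c2) w'')).1 w'' .refl
              (monCont h'' (creflect c1 w))) b w'' .refl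
            (fun w3 _ bv => breify b w3 bv)))
        (creify c2 w (projCont k))
termination_by c _ _ => 2 * sizeOf c
decreasing_by all_goals (simp_wf <;> omega)


/-- Reflection at CNF types. -/
def creflect : ∀ (c w : CNF), Cont structureHS (cforces structureHS c) (ntimes c w)
  | .top, _ => fun _ w' _ φ => φ w' .refl PUnit.unit
  | .con c1 b c2, w => fun _ w' h φ =>
      φ w' .refl
        ((⟨fun _ h2 kc1 => semb b c1 c2 w (leTrans h h2) kc1,
           monCont (leTrans (.cons .refl) h) (creflect c2 w)⟩ :
          ((∀ w2, LeCNF w' w2 →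
              Cont structureHS (cforces structureHS c1) w2 →
              Cont structureHS (bforces structureHS b) w2) ×
            Cont structureHS (cforces structureHS c2) w')))
termination_by c _ => 2 * sizeOf c
decreasing_by all_goals (simp_wf <;> omega)


/-- The semantic function giving the first component of reflection at a `con` type. -/
def semb : ∀ (b : Base) (c1 c2 w : CNF) {w2 : CNF},
    LeCNF (.con c1 b (ntimes c2 w)) w2 →
    Cont structureHS (cforces structureHS c1) w2 →
    Cont structureHS (bforces structureHS b) w2
  | .prp _, c1, _, _, _, h2, kc1 => fun _ w3 h3 φ3 =>
      match decomp (leTrans h2 h3) with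
      | ⟨_, e⟩ => by
          subst e
          exact φ3 _ .refl (HSb.app (creify c1 _ (monCont h3 kc1)))
  | .bd d, c1, c2, w, _, h2, kc1 => fun a w3 h3 φ3 =>
      match decomp (leTrans h2 h3) with
      | ⟨c', e⟩ => by
          subst e
          exact dreflect d c1 (ntimes c2 w) c'
            (creify c1 _ (monCont h3 kc1)) a _ .refl φ3
termination_by b c1 c2 _ _ _ => 2 * (sizeOf b + sizeOf c1 + sizeOf c2)
decreasing_by all_goals (simp_wf <;> omega)


/-- Reification at base types (from values). -/
def breify : ∀ (b : Base) (w : CNF), bforces structureHS b w → HSb w b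
  | .prp _, _, v => v
  | .bd d, w, v => dreify0 d w v
termination_by b _ _ => 2 * sizeOf b
decreasing_by all_goals (simp_wf <;> omega)


/-- Reification at DNF types (from values). -/
def dreify0 : ∀ (d : DNF) (w : CNF), dforces structureHS d w → HSb w (.bd d)
  | .two c1 c2, w, v =>
      match (v : Sum (Cont structureHS (cforces structureHS c1) w)
                     (Cont structureHS (cforces structureHS c2) w)) with
      | .inl k => .inl_two (creify c1 w k)
      | .inr k => .inr_two (creify c2 w k)
  | .dis c1 d2, w, v =>
      match (v : Sum (Cont structureHS (cforces structureHS c1) w)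
                     (Cont structureHS (dforces structureHS d2) w)) with
      | .inl k => .inl_dis (creify c1 w k)
      | .inr k => .inr_dis (k (.bd d2) w .refl (fun w'' _ u => dreify0 d2 w'' u))
termination_by d _ _ => 2 * sizeOf d
decreasing_by all_goals (simp_wf <;> omega)


/-- Reflection at DNF types. -/
def dreflect : ∀ (d : DNF) (c1 c2 c3 : CNF),
    HSc (explogn c1 (.cnf (ntimes c3 (.con c1 (.bd d) c2)))) →
    Cont structureHS (dforces structureHS d) (ntimes c3 (.con c1 (.bd d) c2))
  | d, _, _, _, e => fun a w' h φ =>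
      match decomp h with
      | ⟨_, e'⟩ => by
          subst e'
          exact HSb.cas e (branches d a _ φ)
termination_by d _ _ _ _ => 2 * sizeOf d + 1
decreasing_by all_goals (simp_wf <;> omega)


/-- The case branches used by `dreflect`. -/
def branches : ∀ (d : DNF) (a : Base) (w : CNF),
    (∀ w'', LeCNF w w'' → dforces structureHS d w'' → HSb w'' a) →
    HSc (explogn (explog0 a d) (.cnf w))
  | .two c1 c2, _, w, φ =>
      .pair (φ (ntimes c1 w) (leNtimes c1 w) (Sum.inl (creflect c1 w)))
        (.pair (φ (ntimes c2 w) (leNtimes c2 w) (Sum.inr (creflect c2 w))) .tt)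
  | .dis c1 d3, a, w, φ =>
      .pair (φ (ntimes c1 w) (leNtimes c1 w) (Sum.inl (creflect c1 w)))
        (branches d3 a w (fun w'' h v => φ w'' h (Sum.inr (retD d3 v))))
termination_by d _ _ _ => 2 * sizeOf d
decreasing_by all_goals (simp_wf <;> omega)
end


/-- Reification at DNF types (from continuations). -/
def dreify (d : DNF) (w : CNF) (k : Cont structureHS (dforces structureHS d) w) :
    HSb w (.bd d) :=
  k (.bd d) w .refl (fun w'' _ v => dreify0 d w'' v)

/-- Reification and reflection for the compact-term forcing
structure: there are mutually defined functions `creify`, `creflect`, `dreify`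
and `dreflect` with the stated types. -/
theorem creify_creflect_dreify_dreflect_exist :
    Nonempty
      ((∀ (c : CNF) (w : CNF),
          Cont structureHS (cforces structureHS c) w → HSc (explogn c (.cnf w))) ×
       (∀ (c : CNF) (w : CNF),
          Cont structureHS (cforces structureHS c) (ntimes c w)) ×
       (∀ (d : DNF) (w : CNF),
          Cont structureHS (dforces structureHS d) w → HSb w (.bd d)) ×
       (∀ (d : DNF) (c1 c2 c3 : CNF),
          HSc (explogn c1 (.cnf (ntimes c3 (.con c1 (.bd d) c2)))) →
          Cont structureHS (dforces structureHS d) (ntimes c3 (.con c1 (.bd d) c2)))) := by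
  exact ⟨creify, creflect, dreify, dreflect⟩

end ExpLog
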